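/- arXiv:2405.12868 — 2 statements merged into one kernel-verified Lean document; each statement's English description precedes it below -/
import Mathlib

section
/- (Theorem 4.1) ESTAG is E(3)-equivariant: let T ≥ 2 and N be positive integers, h⁰ : Fin N → Fin T → ℝᶜ be initial node features, and fix arbitrary functions (w, φ_m, φ_h, φ_x for each ESM layer; φ_q, φ_k, φ_v, φ_x for each ETM layer; pooling weights w ∈ ℝ^{T-1}). Define the ESTAG map φ taking positions x : Fin T → Fin N → ℝ³ to a prediction x*(T) ∈ Fin N → ℝ³ as the composition of: (i) the EDFT producing the E(3)-invariant features A_{ij}(k) = w_i(k) w_j(k) |⟨f_i(k), f_j(k)⟩| and c_i(k) = w_i(k)‖f_i(k)‖² with f_i(k) = Σ_{t=0}^{T-1} exp(-i'·2πkt/T) • (x_i(t) - x̄(t)); (ii) L alternating ESM layers (per frame t: m_{ij} = φ_m(h_i(t), h_j(t), ‖y_i(t) - y_j(t)‖², A_{ij}), h_i(t) ← h_i(t) + φ_h(h_i(t), c_i, Σ_{j≠i} m_{ij}), y_i(t) ← y_i(t) + (1/|𝒩(i)|) Σ_{j∈𝒩(i)} (y_i(t) - y_j(t)) φ_x(m_{ij}))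 and ETM layers (per node i: forward softmax attention α_i(t,s) over s ≤ t computed from queries φ_q(h_i(t)) and keys φ_k(h_i(s)), h_i(t) ← h_i(t) + Σ_{s≤t} α_i(t,s) φ_v(h_i(s)), y_i(t) ← y_i(t) + Σ_{s≤t} α_i(t,s)(y_i(t) - y_i(s)) φ_x(φ_v(h_i(s)))); (iii) the equivariant temporal pooling x*_i(T) = Σ_{t=0}^{T-2} w_t (y_i(t) - y_i(T-1)) + y_i(T-1). Then for every real orthogonal 3×3 matrix O and every b ∈ ℝ³, φ applied to the transformed input (i,t) ↦ O·x_i(t) + b (with the same initial features h⁰) yields O·x*_i(T) + b for every node i. -/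
open scoped BigOperators

/-! Basic geometric ingredients. -/

/-- The E(3) action `x ↦ O·x + b` on 3-vectors. -/
noncomputable def e3Act (O : Matrix (Fin 3) (Fin 3) ℝ) (b : EuclideanSpace ℝ (Fin 3))
    (v : EuclideanSpace ℝ (Fin 3)) : EuclideanSpace ℝ (Fin 3) :=
  (show EuclideanSpace ℝ (Fin 3) from WithLp.toLp 2 (O.mulVec v)) + b

/-- Componentwise coercion of a real 3-vector into a complex 3-vector. -/
noncomputable def complexify (v : EuclideanSpace ℝ (Fin 3)) : EuclideanSpace ℂ (Fin 3) :=
  WithLp.toLp 2 (fun a => (v a : ℂ))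

/-- Mean position of the `N` nodes at frame `t`. -/
noncomputable def meanPos {T N : ℕ} (x : Fin T → Fin N → EuclideanSpace ℝ (Fin 3))
    (t : Fin T) : EuclideanSpace ℝ (Fin 3) :=
  (N : ℝ)⁻¹ • ∑ j : Fin N, x t j

/-! (i) EDFT features. -/

/-- EDFT: `f_i(k) = ∑_{t=0}^{T-1} exp(-i'·2πkt/T) • (x_i(t) - x̄(t)) ∈ ℂ³`. -/
noncomputable def edft {T N : ℕ} (x : Fin T → Fin N → EuclideanSpace ℝ (Fin 3))
    (i : Fin N) (k : Fin T) : EuclideanSpace ℂ (Fin 3) :=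
  ∑ t : Fin T,
    Complex.exp (-Complex.I * (2 * (Real.pi : ℂ) * (k.val : ℂ) * (t.val : ℂ) / (T : ℂ))) •
      complexify (x t i - meanPos x t)

/-- Frequency cross-correlation `A_{ij}(k) = w_i(k) w_j(k) |⟨f_i(k), f_j(k)⟩|`. -/
noncomputable def edftCrossCorr {T N : ℕ} (wE : Fin N → Fin T → ℝ)
    (x : Fin T → Fin N → EuclideanSpace ℝ (Fin 3)) (i j : Fin N) (k : Fin T) : ℝ :=
  wE i k * wE j k * ‖(inner ℂ (edft x i k) (edft x j k) : ℂ)‖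

/-- Frequency amplitude `c_i(k) = w_i(k) ‖f_i(k)‖²`. -/
noncomputable def edftAmp {T N : ℕ} (wE : Fin N → Fin T → ℝ)
    (x : Fin T → Fin N → EuclideanSpace ℝ (Fin 3)) (i : Fin N) (k : Fin T) : ℝ :=
  wE i k * ‖edft x i k‖ ^ 2

/-! (ii) The alternating ESM / ETM layers. The state carries, for each node `i` and
frame `t`, the hidden feature `h_i(t) ∈ ℝᶜ` and the position `y_i(t) ∈ ℝ³`. -/

/-- The spatio-temporal state: hidden features and positions of all nodes and frames. -/
def EstagState (T N c : ℕ) : Type :=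
  (Fin N → Fin T → (Fin c → ℝ)) × (Fin N → Fin T → EuclideanSpace ℝ (Fin 3))

/-- One ESM layer applied per frame `t`:
`m_{ij} = φ_m(h_i(t), h_j(t), ‖y_i(t) - y_j(t)‖², A_{ij})`,
`h_i(t) ← h_i(t) + φ_h(h_i(t), c_i, Σ_{j≠i} m_{ij})`,
`y_i(t) ← y_i(t) + (1/|𝒩(i)|) Σ_{j∈𝒩(i)} (y_i(t) - y_j(t)) φ_x(m_{ij})`. -/
noncomputable def esmLayer {T N c d : ℕ}
    (φm : (Fin c → ℝ) → (Fin c → ℝ) → ℝ → (Fin T → ℝ) → (Fin d → ℝ))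
    (φh : (Fin c → ℝ) → (Fin T → ℝ) → (Fin d → ℝ) → (Fin c → ℝ))
    (φx : (Fin d → ℝ) → ℝ)
    (𝒩 : Fin N → Finset (Fin N))
    (A : Fin N → Fin N → (Fin T → ℝ)) (cAmp : Fin N → (Fin T → ℝ))
    (s : EstagState T N c) : EstagState T N c :=
  let h := s.1
  let y := s.2
  let msg := fun (i j : Fin N) (t : Fin T) => φm (h i t) (h j t) (‖y i t - y j t‖ ^ 2) (A i j)
  ⟨fun i t => h i t + φh (h i t) (cAmp i) (∑ j ∈ Finset.univ.erase i, msg i j t),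
   fun i t => y i t + ((𝒩 i).card : ℝ)⁻¹ • ∑ j ∈ 𝒩 i, φx (msg i j t) • (y i t - y j t)⟩

/-- Forward attention weights
`α_i(t,s) = exp(⟨φ_q(h_i(t)), φ_k(h_i(s))⟩) / Σ_{s'≤t} exp(⟨φ_q(h_i(t)), φ_k(h_i(s'))⟩)`. -/
noncomputable def etmAttn {T N c d : ℕ}
    (φq φk : (Fin c → ℝ) → (Fin d → ℝ))
    (h : Fin N → Fin T → (Fin c → ℝ)) (i : Fin N) (t s : Fin T) : ℝ :=
  Real.exp (∑ a, φq (h i t) a * φk (h i s) a) /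
    ∑ s' ∈ Finset.Iic t, Real.exp (∑ a, φq (h i t) a * φk (h i s') a)

/-- One ETM layer applied per node `i` (forward attention over frames `s ≤ t`):
`h_i(t) ← h_i(t) + Σ_{s≤t} α_i(t,s) φ_v(h_i(s))`,
`y_i(t) ← y_i(t) + Σ_{s≤t} α_i(t,s) (y_i(t) - y_i(s)) φ_x(φ_v(h_i(s)))`. -/
noncomputable def etmLayer {T N c d : ℕ}
    (φq φk : (Fin c → ℝ) → (Fin d → ℝ)) (φv : (Fin c → ℝ) → (Fin c → ℝ))
    (φx : (Fin c → ℝ) → ℝ)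
    (s : EstagState T N c) : EstagState T N c :=
  let h := s.1
  let y := s.2
  ⟨fun i t => h i t + ∑ u ∈ Finset.Iic t, etmAttn φq φk h i t u • φv (h i u),
   fun i t => y i t + ∑ u ∈ Finset.Iic t,
      (etmAttn φq φk h i t u * φx (φv (h i u))) • (y i t - y i u)⟩

/-- `L` alternating ESM / ETM layers (layer `l` uses its own parameter functions). -/
noncomputable def runLayers {T N c d : ℕ}
    (φm : ℕ → (Fin c → ℝ) → (Fin c → ℝ) → ℝ → (Fin T → ℝ) → (Fin d → ℝ))
    (φh : ℕ → (Fin c → ℝ) → (Fin T → ℝ) → (Fin d → ℝ) → (Fin c → ℝ))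
    (φxS : ℕ → (Fin d → ℝ) → ℝ)
    (φq φk : ℕ → (Fin c → ℝ) → (Fin d → ℝ)) (φv : ℕ → (Fin c → ℝ) → (Fin c → ℝ))
    (φxT : ℕ → (Fin c → ℝ) → ℝ)
    (𝒩 : Fin N → Finset (Fin N))
    (A : Fin N → Fin N → (Fin T → ℝ)) (cAmp : Fin N → (Fin T → ℝ)) :
    ℕ → EstagState T N c → EstagState T N c
  | 0, s => s
  | (l + 1), s =>
      etmLayer (φq l) (φk l) (φv l) (φxT l)
        (esmLayer (φm l) (φh l) (φxS l) 𝒩 A cAmp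
          (runLayers φm φh φxS φq φk φv φxT 𝒩 A cAmp l s))

/-! (iii) Equivariant temporal pooling and the full ESTAG map. -/

/-- Equivariant temporal pooling
`x*_i(T) = Σ_{t=0}^{T-2} w_t (y_i(t) - y_i(T-1)) + y_i(T-1)`. -/
noncomputable def temporalPool {T : ℕ} (hT : 2 ≤ T) (wP : Fin (T - 1) → ℝ)
    (y : Fin T → EuclideanSpace ℝ (Fin 3)) : EuclideanSpace ℝ (Fin 3) :=
  (∑ t : Fin (T - 1), wP t • (y ⟨t.val, by omega⟩ - y ⟨T - 1, by omega⟩)) + y ⟨T - 1, by omega⟩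

/-- The full ESTAG map `φ`: EDFT features, then `L` alternating ESM/ETM layers started
from the initial features `h⁰` and the input positions, then temporal pooling. -/
noncomputable def estag {T N c d : ℕ} (L : ℕ) (hT : 2 ≤ T)
    (wE : Fin N → Fin T → ℝ)
    (φm : ℕ → (Fin c → ℝ) → (Fin c → ℝ) → ℝ → (Fin T → ℝ) → (Fin d → ℝ))
    (φh : ℕ → (Fin c → ℝ) → (Fin T → ℝ) → (Fin d → ℝ) → (Fin c → ℝ))
    (φxS : ℕ → (Fin d → ℝ) → ℝ)
    (φq φk : ℕ → (Fin c → ℝ) → (Fin d → ℝ)) (φv : ℕ → (Fin c → ℝ) → (Fin c → ℝ))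
    (φxT : ℕ → (Fin c → ℝ) → ℝ)
    (wP : Fin (T - 1) → ℝ)
    (𝒩 : Fin N → Finset (Fin N))
    (h0 : Fin N → Fin T → (Fin c → ℝ))
    (x : Fin T → Fin N → EuclideanSpace ℝ (Fin 3)) : Fin N → EuclideanSpace ℝ (Fin 3) :=
  let A := fun i j => fun k => edftCrossCorr wE x i j k
  let cAmp := fun i => fun k => edftAmp wE x i k
  let out := runLayers φm φh φxS φq φk φv φxT 𝒩 A cAmp L ⟨h0, fun i t => x t i⟩
  fun i => temporalPool hT wP (fun t => out.2 i t)

section Aux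
open Matrix

variable (O : Matrix (Fin 3) (Fin 3) ℝ) (b : EuclideanSpace ℝ (Fin 3))

/-- `O` as a map on `ℝ³`. -/
noncomputable def mulVecE (v : EuclideanSpace ℝ (Fin 3)) : EuclideanSpace ℝ (Fin 3) :=
  WithLp.toLp 2 (O.mulVec v)

lemma mulVecE_apply (v : EuclideanSpace ℝ (Fin 3)) (a : Fin 3) :
    mulVecE O v a = ∑ j, O a j * v j := rfl

lemma e3Act_eq (v : EuclideanSpace ℝ (Fin 3)) : e3Act O b v = mulVecE O v + b := rfl

lemma mulVecE_add (u v : EuclideanSpace ℝ (Fin 3)) :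
    mulVecE O (u + v) = mulVecE O u + mulVecE O v := by
  ext a
  simp [mulVecE_apply, PiLp.add_apply, mul_add, Finset.sum_add_distrib]

lemma mulVecE_sub (u v : EuclideanSpace ℝ (Fin 3)) :
    mulVecE O (u - v) = mulVecE O u - mulVecE O v := by
  ext a
  simp [mulVecE_apply, PiLp.sub_apply, mul_sub, Finset.sum_sub_distrib]

lemma mulVecE_smul (r : ℝ) (v : EuclideanSpace ℝ (Fin 3)) :
    mulVecE O (r • v) = r • mulVecE O v := by
  ext a
  simp [mulVecE_apply, PiLp.smul_apply, Finset.mul_sum, smul_eq_mul]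
  exact Finset.sum_congr rfl fun j _ => by ring

lemma mulVecE_sum {ι : Type*} (s : Finset ι) (f : ι → EuclideanSpace ℝ (Fin 3)) :
    mulVecE O (∑ j ∈ s, f j) = ∑ j ∈ s, mulVecE O (f j) := by
  classical
  induction s using Finset.induction with
  | empty =>
      ext a
      simp [mulVecE_apply]
  | insert _ _ h ih => simp [Finset.sum_insert h, mulVecE_add, ih]

lemma e3Act_sub (u v : EuclideanSpace ℝ (Fin 3)) :
    e3Act O b u - e3Act O b v = mulVecE O (u - v) := by
  rw [e3Act_eq, e3Act_eq, mulVecE_sub]; abel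

lemma e3Act_add_mulVecE (u w : EuclideanSpace ℝ (Fin 3)) :
    e3Act O b u + mulVecE O w = e3Act O b (u + w) := by
  rw [e3Act_eq, e3Act_eq, mulVecE_add]; abel

lemma dot_mulVec_orth {K : Type*} [CommRing K] (M : Matrix (Fin 3) (Fin 3) K)
    (hM : Mᵀ * M = 1) (u v : Fin 3 → K) :
    (M.mulVec u) ⬝ᵥ (M.mulVec v) = u ⬝ᵥ v := by
  rw [Matrix.dotProduct_mulVec, Matrix.vecMul_mulVec, hM, Matrix.vecMul_one]

lemma orth_tmul (hO : O ∈ Matrix.orthogonalGroup (Fin 3) ℝ) : Oᵀ * O = 1 := by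
  rw [Matrix.mem_orthogonalGroup_iff'] at hO
  simpa using hO

lemma norm_mulVecE (hO : O ∈ Matrix.orthogonalGroup (Fin 3) ℝ)
    (v : EuclideanSpace ℝ (Fin 3)) : ‖mulVecE O v‖ = ‖v‖ := by
  rw [EuclideanSpace.norm_eq, EuclideanSpace.norm_eq]
  congr 1
  have := dot_mulVec_orth O (orth_tmul O hO) v v
  simpa [dotProduct, mulVecE, Matrix.mulVec, sq, mul_comm] using this

end Aux
section EDFTInv
open Matrix

variable (O : Matrix (Fin 3) (Fin 3) ℝ) (b : EuclideanSpace ℝ (Fin 3))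

/-- `O` (entries coerced to `ℂ`) acting on complex 3-vectors. -/
noncomputable def mulVecC (v : EuclideanSpace ℂ (Fin 3)) : EuclideanSpace ℂ (Fin 3) :=
  WithLp.toLp 2 ((O.map (Complex.ofRealHom : ℝ → ℂ)).mulVec v)

lemma mulVecC_apply (v : EuclideanSpace ℂ (Fin 3)) (a : Fin 3) :
    mulVecC O v a = ∑ j, (O a j : ℂ) * v j := rfl

lemma complexify_mulVecE (v : EuclideanSpace ℝ (Fin 3)) :
    complexify (mulVecE O v) = mulVecC O (complexify v) := by
  ext a
  simp [complexify, mulVecE_apply, mulVecC_apply]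

lemma mulVecC_smul (z : ℂ) (v : EuclideanSpace ℂ (Fin 3)) :
    mulVecC O (z • v) = z • mulVecC O v := by
  ext a
  simp [mulVecC_apply, PiLp.smul_apply, Finset.mul_sum, smul_eq_mul]
  exact Finset.sum_congr rfl fun j _ => by ring

lemma mulVecC_add (u v : EuclideanSpace ℂ (Fin 3)) :
    mulVecC O (u + v) = mulVecC O u + mulVecC O v := by
  ext a
  simp [mulVecC_apply, PiLp.add_apply, mul_add, Finset.sum_add_distrib]

lemma mulVecC_sum {ι : Type*} (s : Finset ι) (f : ι → EuclideanSpace ℂ (Fin 3)) :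
    mulVecC O (∑ j ∈ s, f j) = ∑ j ∈ s, mulVecC O (f j) := by
  classical
  induction s using Finset.induction with
  | empty => ext a; simp [mulVecC_apply]
  | insert _ _ h ih => simp [Finset.sum_insert h, mulVecC_add, ih]

lemma meanPos_e3Act {T N : ℕ} (hN : 0 < N) (x : Fin T → Fin N → EuclideanSpace ℝ (Fin 3))
    (t : Fin T) :
    meanPos (fun t j => e3Act O b (x t j)) t = e3Act O b (meanPos x t) := by
  unfold meanPos
  simp only [e3Act_eq, Finset.sum_add_distrib, Finset.sum_const, Finset.card_univ,
    Fintype.card_fin, smul_add, ← mulVecE_sum]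
  rw [mulVecE_smul]
  congr 1
  rw [← Nat.cast_smul_eq_nsmul ℝ, smul_smul,
    inv_mul_cancel₀ (by exact_mod_cast hN.ne' : (N : ℝ) ≠ 0), one_smul]

lemma edft_e3Act {T N : ℕ} (hN : 0 < N) (x : Fin T → Fin N → EuclideanSpace ℝ (Fin 3))
    (i : Fin N) (k : Fin T) :
    edft (fun t j => e3Act O b (x t j)) i k = mulVecC O (edft x i k) := by
  unfold edft
  rw [mulVecC_sum]
  refine Finset.sum_congr rfl fun t _ => ?_
  have hdiff : e3Act O b (x t i) - meanPos (fun t j => e3Act O b (x t j)) t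
      = mulVecE O (x t i - meanPos x t) := by
    rw [meanPos_e3Act O b hN, e3Act_sub]
  rw [hdiff, complexify_mulVecE, mulVecC_smul]

lemma OcT_mul_Oc (hO : O ∈ Matrix.orthogonalGroup (Fin 3) ℝ) :
    (O.map (Complex.ofRealHom : ℝ → ℂ))ᵀ * O.map (Complex.ofRealHom : ℝ → ℂ) = 1 := by
  have hmul := Matrix.map_mul (L := Oᵀ) (M := O) (f := Complex.ofRealHom)
  rw [← Matrix.transpose_map, ← hmul, orth_tmul O hO,
    Matrix.map_one _ (map_zero Complex.ofRealHom) (map_one Complex.ofRealHom)]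

lemma inner_mulVecC (hO : O ∈ Matrix.orthogonalGroup (Fin 3) ℝ)
    (f g : EuclideanSpace ℂ (Fin 3)) :
    (inner ℂ (mulVecC O f) (mulVecC O g) : ℂ) = (inner ℂ f g : ℂ) := by
  have key : ∀ a, (starRingEnd ℂ) (mulVecC O f a) = mulVecC O (WithLp.toLp 2 (fun j => (starRingEnd ℂ) (f j))) a := by
    intro a
    simp [mulVecC_apply, map_sum, _root_.map_mul, Complex.conj_ofReal]
  calc (inner ℂ (mulVecC O f) (mulVecC O g) : ℂ)
      = ∑ a, (starRingEnd ℂ) (mulVecC O f a) * mulVecC O g a := by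
        simp [PiLp.inner_apply, RCLike.inner_apply, mul_comm]
    _ = ((O.map (Complex.ofRealHom : ℝ → ℂ)).mulVec (fun j => (starRingEnd ℂ) (f j))) ⬝ᵥ
          ((O.map (Complex.ofRealHom : ℝ → ℂ)).mulVec g) := by
        refine Finset.sum_congr rfl fun a _ => ?_
        rw [key a]; rfl
    _ = (fun j => (starRingEnd ℂ) (f j)) ⬝ᵥ g :=
        dot_mulVec_orth _ (OcT_mul_Oc O hO) _ _
    _ = (inner ℂ f g : ℂ) := by
        simp [PiLp.inner_apply, RCLike.inner_apply, dotProduct, mul_comm]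

lemma norm_sq_mulVecC (hO : O ∈ Matrix.orthogonalGroup (Fin 3) ℝ)
    (f : EuclideanSpace ℂ (Fin 3)) : ‖mulVecC O f‖ ^ 2 = ‖f‖ ^ 2 := by
  have h1 := inner_mulVecC O hO f f
  rw [@norm_sq_eq_re_inner ℂ, @norm_sq_eq_re_inner ℂ, h1]

lemma edftCrossCorr_e3Act {T N : ℕ} (hN : 0 < N) (hO : O ∈ Matrix.orthogonalGroup (Fin 3) ℝ)
    (wE : Fin N → Fin T → ℝ) (x : Fin T → Fin N → EuclideanSpace ℝ (Fin 3))
    (i j : Fin N) (k : Fin T) :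
    edftCrossCorr wE (fun t j => e3Act O b (x t j)) i j k = edftCrossCorr wE x i j k := by
  unfold edftCrossCorr
  rw [edft_e3Act O b hN, edft_e3Act O b hN, inner_mulVecC O hO]

lemma edftAmp_e3Act {T N : ℕ} (hN : 0 < N) (hO : O ∈ Matrix.orthogonalGroup (Fin 3) ℝ)
    (wE : Fin N → Fin T → ℝ) (x : Fin T → Fin N → EuclideanSpace ℝ (Fin 3))
    (i : Fin N) (k : Fin T) :
    edftAmp wE (fun t j => e3Act O b (x t j)) i k = edftAmp wE x i k := by
  unfold edftAmp
  rw [edft_e3Act O b hN, norm_sq_mulVecC O hO]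

end EDFTInv
section Layers
open Matrix

variable (O : Matrix (Fin 3) (Fin 3) ℝ) (b : EuclideanSpace ℝ (Fin 3))

lemma esmLayer_equivariant {T N c d : ℕ} (hO : O ∈ Matrix.orthogonalGroup (Fin 3) ℝ)
    (φm : (Fin c → ℝ) → (Fin c → ℝ) → ℝ → (Fin T → ℝ) → (Fin d → ℝ))
    (φh : (Fin c → ℝ) → (Fin T → ℝ) → (Fin d → ℝ) → (Fin c → ℝ))
    (φx : (Fin d → ℝ) → ℝ)
    (𝒩 : Fin N → Finset (Fin N))
    (A : Fin N → Fin N → (Fin T → ℝ)) (cAmp : Fin N → (Fin T → ℝ))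
    (s s' : EstagState T N c)
    (H1 : s'.1 = s.1) (H2 : ∀ i t, s'.2 i t = e3Act O b (s.2 i t)) :
    (esmLayer φm φh φx 𝒩 A cAmp s').1 = (esmLayer φm φh φx 𝒩 A cAmp s).1 ∧
      ∀ i t, (esmLayer φm φh φx 𝒩 A cAmp s').2 i t =
        e3Act O b ((esmLayer φm φh φx 𝒩 A cAmp s).2 i t) := by
  have hmsg : ∀ i j t, φm (s'.1 i t) (s'.1 j t) (‖s'.2 i t - s'.2 j t‖ ^ 2) (A i j)
      = φm (s.1 i t) (s.1 j t) (‖s.2 i t - s.2 j t‖ ^ 2) (A i j) := by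
    intro i j t
    rw [H1, H2, H2, e3Act_sub, norm_mulVecE O hO]
  constructor
  · funext i t
    show s'.1 i t + φh (s'.1 i t) (cAmp i) _ = s.1 i t + φh (s.1 i t) (cAmp i) _
    have hsum : (∑ j ∈ Finset.univ.erase i,
          φm (s'.1 i t) (s'.1 j t) (‖s'.2 i t - s'.2 j t‖ ^ 2) (A i j))
        = ∑ j ∈ Finset.univ.erase i,
          φm (s.1 i t) (s.1 j t) (‖s.2 i t - s.2 j t‖ ^ 2) (A i j) :=
      Finset.sum_congr rfl fun j _ => hmsg i j t
    rw [hsum, H1]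
  · intro i t
    show s'.2 i t + ((𝒩 i).card : ℝ)⁻¹ •
        ∑ j ∈ 𝒩 i, φx (φm (s'.1 i t) (s'.1 j t) (‖s'.2 i t - s'.2 j t‖ ^ 2) (A i j)) •
          (s'.2 i t - s'.2 j t)
      = e3Act O b (s.2 i t + ((𝒩 i).card : ℝ)⁻¹ •
        ∑ j ∈ 𝒩 i, φx (φm (s.1 i t) (s.1 j t) (‖s.2 i t - s.2 j t‖ ^ 2) (A i j)) •
          (s.2 i t - s.2 j t))
    rw [← e3Act_add_mulVecE, H2 i t]
    congr 1
    rw [mulVecE_smul, mulVecE_sum]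
    congr 1
    refine Finset.sum_congr rfl fun j _ => ?_
    rw [mulVecE_smul, H1, H2 j t, e3Act_sub, norm_mulVecE O hO]

lemma etmLayer_equivariant {T N c d : ℕ}
    (φq φk : (Fin c → ℝ) → (Fin d → ℝ)) (φv : (Fin c → ℝ) → (Fin c → ℝ))
    (φx : (Fin c → ℝ) → ℝ)
    (s s' : EstagState T N c)
    (H1 : s'.1 = s.1) (H2 : ∀ i t, s'.2 i t = e3Act O b (s.2 i t)) :
    (etmLayer φq φk φv φx s').1 = (etmLayer φq φk φv φx s).1 ∧
      ∀ i t, (etmLayer φq φk φv φx s').2 i t = e3Act O b ((etmLayer φq φk φv φx s).2 i t) := by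
  constructor
  · funext i t
    show s'.1 i t + ∑ u ∈ Finset.Iic t, etmAttn φq φk s'.1 i t u • φv (s'.1 i u) = _
    rw [H1]
    rfl
  · intro i t
    show s'.2 i t + ∑ u ∈ Finset.Iic t,
        (etmAttn φq φk s'.1 i t u * φx (φv (s'.1 i u))) • (s'.2 i t - s'.2 i u)
      = e3Act O b (s.2 i t + ∑ u ∈ Finset.Iic t,
        (etmAttn φq φk s.1 i t u * φx (φv (s.1 i u))) • (s.2 i t - s.2 i u))
    rw [← e3Act_add_mulVecE, H2 i t]
    congr 1
    rw [mulVecE_sum]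
    refine Finset.sum_congr rfl fun u _ => ?_
    rw [mulVecE_smul, H1, H2 i u, e3Act_sub]

lemma runLayers_equivariant {T N c d : ℕ} (hO : O ∈ Matrix.orthogonalGroup (Fin 3) ℝ)
    (φm : ℕ → (Fin c → ℝ) → (Fin c → ℝ) → ℝ → (Fin T → ℝ) → (Fin d → ℝ))
    (φh : ℕ → (Fin c → ℝ) → (Fin T → ℝ) → (Fin d → ℝ) → (Fin c → ℝ))
    (φxS : ℕ → (Fin d → ℝ) → ℝ)
    (φq φk : ℕ → (Fin c → ℝ) → (Fin d → ℝ)) (φv : ℕ → (Fin c → ℝ) → (Fin c → ℝ))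
    (φxT : ℕ → (Fin c → ℝ) → ℝ)
    (𝒩 : Fin N → Finset (Fin N))
    (A : Fin N → Fin N → (Fin T → ℝ)) (cAmp : Fin N → (Fin T → ℝ))
    (L : ℕ) (s s' : EstagState T N c)
    (H1 : s'.1 = s.1) (H2 : ∀ i t, s'.2 i t = e3Act O b (s.2 i t)) :
    (runLayers φm φh φxS φq φk φv φxT 𝒩 A cAmp L s').1 =
        (runLayers φm φh φxS φq φk φv φxT 𝒩 A cAmp L s).1 ∧
      ∀ i t, (runLayers φm φh φxS φq φk φv φxT 𝒩 A cAmp L s').2 i t =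
        e3Act O b ((runLayers φm φh φxS φq φk φv φxT 𝒩 A cAmp L s).2 i t) := by
  induction L with
  | zero => exact ⟨H1, H2⟩
  | succ l ih =>
      obtain ⟨ih1, ih2⟩ := ih
      obtain ⟨e1, e2⟩ := esmLayer_equivariant O b hO (φm l) (φh l) (φxS l) 𝒩 A cAmp _ _ ih1 ih2
      exact etmLayer_equivariant O b (φq l) (φk l) (φv l) (φxT l) _ _ e1 e2

lemma temporalPool_equivariant {T : ℕ} (hT : 2 ≤ T) (wP : Fin (T - 1) → ℝ)
    (y : Fin T → EuclideanSpace ℝ (Fin 3)) :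
    temporalPool hT wP (fun t => e3Act O b (y t)) = e3Act O b (temporalPool hT wP y) := by
  unfold temporalPool
  rw [add_comm, add_comm (∑ t : Fin (T - 1), wP t • (y ⟨t.val, by omega⟩ - y ⟨T - 1, by omega⟩)),
    ← e3Act_add_mulVecE]
  congr 1
  rw [mulVecE_sum]
  refine Finset.sum_congr rfl fun t _ => ?_
  rw [mulVecE_smul, e3Act_sub]

end Layers

/-- **Theorem 4.1.** ESTAG is E(3)-equivariant: for every real orthogonal
3×3 matrix `O` and every `b ∈ ℝ³`, applying the full ESTAG map to the transformed input
`(i,t) ↦ O·x_i(t) + b` (with the same initial features `h⁰`, neighborhoods, and parameter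
functions) yields `O·x*_i(T) + b` for every node `i`. -/
theorem estag_E3_equivariant (T N c d L : ℕ) (hT : 2 ≤ T) (hN : 0 < N)
    (wE : Fin N → Fin T → ℝ)
    (φm : ℕ → (Fin c → ℝ) → (Fin c → ℝ) → ℝ → (Fin T → ℝ) → (Fin d → ℝ))
    (φh : ℕ → (Fin c → ℝ) → (Fin T → ℝ) → (Fin d → ℝ) → (Fin c → ℝ))
    (φxS : ℕ → (Fin d → ℝ) → ℝ)
    (φq φk : ℕ → (Fin c → ℝ) → (Fin d → ℝ)) (φv : ℕ → (Fin c → ℝ) → (Fin c → ℝ))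
    (φxT : ℕ → (Fin c → ℝ) → ℝ)
    (wP : Fin (T - 1) → ℝ)
    (𝒩 : Fin N → Finset (Fin N)) (h𝒩 : ∀ i, (𝒩 i).Nonempty)
    (h0 : Fin N → Fin T → (Fin c → ℝ))
    (x : Fin T → Fin N → EuclideanSpace ℝ (Fin 3))
    (O : Matrix (Fin 3) (Fin 3) ℝ) (hO : O ∈ Matrix.orthogonalGroup (Fin 3) ℝ)
    (b : EuclideanSpace ℝ (Fin 3)) :
    ∀ i : Fin N,
      estag L hT wE φm φh φxS φq φk φv φxT wP 𝒩 h0 (fun t j => e3Act O b (x t j)) i =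
        e3Act O b (estag L hT wE φm φh φxS φq φk φv φxT wP 𝒩 h0 x i) := by
  intro i
  unfold estag
  simp only
  have hA : (fun i j k => edftCrossCorr wE (fun t j => e3Act O b (x t j)) i j k)
      = (fun i j k => edftCrossCorr wE x i j k) := by
    funext i j k
    exact edftCrossCorr_e3Act O b hN hO wE x i j k
  have hc : (fun i k => edftAmp wE (fun t j => e3Act O b (x t j)) i k)
      = (fun i k => edftAmp wE x i k) := by
    funext i k
    exact edftAmp_e3Act O b hN hO wE x i k
  rw [hA, hc]
  obtain ⟨-, h2⟩ := runLayers_equivariant O b hO φm φh φxS φq φk φv φxT 𝒩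
    (fun i j k => edftCrossCorr wE x i j k) (fun i k => edftAmp wE x i k) L
    ⟨h0, fun i t => x t i⟩ ⟨h0, fun i t => e3Act O b (x t i)⟩ rfl (fun i t => rfl)
  have : (fun t => (runLayers φm φh φxS φq φk φv φxT 𝒩
      (fun i j k => edftCrossCorr wE x i j k) (fun i k => edftAmp wE x i k) L
      ⟨h0, fun i t => e3Act O b (x t i)⟩).2 i t)
    = fun t => e3Act O b ((runLayers φm φh φxS φq φk φv φxT 𝒩
      (fun i j k => edftCrossCorr wE x i j k) (fun i k => edftAmp wE x i k) L
      ⟨h0, fun i t => x t i⟩).2 i t) := by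
    funext t; exact h2 i t
  rw [this, temporalPool_equivariant]
end

section
/- The generic equivariance lemma for distance-gated coordinate updates: let N be a positive integer, 𝒩 : Fin N → Finset (Fin N), and for each pair (i,j) let c_{ij} : ℝ → ℝ be an arbitrary function. For positions y : Fin N → ℝ³, define the update y'_i = y_i + Σ_{j ∈ 𝒩(i)} c_{ij}(‖y_i - y_j‖²) · (y_i - y_j). Then for every real orthogonal 3×3 matrix O and every b ∈ ℝ³, the update applied to the transformed positions i ↦ O·y_i + b yields O·y'_i + b for every node i. -/
open scoped BigOperators

/-- Distance-gated coordinate update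
`y'_i = y_i + Σ_{j ∈ 𝒩(i)} c_{ij}(‖y_i - y_j‖²) · (y_i - y_j)`. -/
noncomputable def gatedUpdate {N : ℕ} (𝒩 : Fin N → Finset (Fin N))
    (c : Fin N → Fin N → ℝ → ℝ)
    (y : Fin N → EuclideanSpace ℝ (Fin 3)) (i : Fin N) : EuclideanSpace ℝ (Fin 3) :=
  y i + ∑ j ∈ 𝒩 i, c i j (‖y i - y j‖ ^ 2) • (y i - y j)

open scoped RealInnerProductSpace in
/-- An orthogonal matrix preserves the Euclidean norm. -/
lemma mulVec_norm_eq' (O : Matrix (Fin 3) (Fin 3) ℝ) (hO : O ∈ Matrix.orthogonalGroup (Fin 3) ℝ)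
    (v : EuclideanSpace ℝ (Fin 3)) :
    ‖(show EuclideanSpace ℝ (Fin 3) from WithLp.toLp 2 (O.mulVec v))‖ = ‖v‖ := by
  have h1 := (Matrix.mem_orthogonalGroup_iff' (Fin 3) ℝ).mp hO
  have key : (⟪(show EuclideanSpace ℝ (Fin 3) from WithLp.toLp 2 (O.mulVec v)),
      (show EuclideanSpace ℝ (Fin 3) from WithLp.toLp 2 (O.mulVec v))⟫) = ⟪v, v⟫ := by
    rw [EuclideanSpace.inner_eq_star_dotProduct, EuclideanSpace.inner_eq_star_dotProduct]
    simp only [star_trivial]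
    change dotProduct (O.mulVec v.ofLp) (O.mulVec v.ofLp) = dotProduct v.ofLp v.ofLp
    rw [Matrix.dotProduct_mulVec, ← Matrix.mulVec_transpose, Matrix.mulVec_mulVec]
    have : O.transpose * O = 1 := by simpa [Matrix.star_eq_conjTranspose] using h1
    rw [this, Matrix.one_mulVec]
  have := congrArg Real.sqrt key
  rwa [real_inner_self_eq_norm_sq, real_inner_self_eq_norm_sq, Real.sqrt_sq (norm_nonneg _),
    Real.sqrt_sq (norm_nonneg _)] at this

/-- Generic equivariance of distance-gated coordinate updates: if the
scalar gates depend on positions only through the pairwise squared distances, then the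
update commutes with every rigid motion `y ↦ O·y + b`. -/
theorem gatedUpdate_E3_equivariant (N : ℕ) (hN : 0 < N)
    (𝒩 : Fin N → Finset (Fin N)) (c : Fin N → Fin N → ℝ → ℝ)
    (y : Fin N → EuclideanSpace ℝ (Fin 3))
    (O : Matrix (Fin 3) (Fin 3) ℝ) (hO : O ∈ Matrix.orthogonalGroup (Fin 3) ℝ)
    (b : EuclideanSpace ℝ (Fin 3)) :
    ∀ i, gatedUpdate 𝒩 c (fun j => e3Act O b (y j)) i = e3Act O b (gatedUpdate 𝒩 c y i) := by
  intro i
  unfold gatedUpdate e3Act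
  have hOE : ∀ v : EuclideanSpace ℝ (Fin 3),
      (show EuclideanSpace ℝ (Fin 3) from WithLp.toLp 2 (O.mulVec v)) = Matrix.toEuclideanLin O v := fun _ => rfl
  simp only [hOE]
  have hsub : ∀ j k : Fin N,
      (Matrix.toEuclideanLin O (y j) + b) - (Matrix.toEuclideanLin O (y k) + b)
      = Matrix.toEuclideanLin O (y j - y k) := by
    intro j k
    rw [map_sub]; abel
  simp only [hsub]
  have hnorm : ∀ j k : Fin N, ‖Matrix.toEuclideanLin O (y j - y k)‖ = ‖y j - y k‖ := by
    intro j k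
    rw [← hOE]
    exact mulVec_norm_eq' O hO _
  simp only [hnorm]
  rw [map_add, map_sum]
  simp only [map_smul]
  abel
end
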